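/- arXiv:1206.3177 — 8 statements merged into one kernel-verified Lean document; each statement's English description precedes it below -/
import Mathlib

section
/- For every n ≥ 0, the D-iteration state vectors satisfy the invariant H_n + F_n = P·H_n + B. -/
open Matrix

/-- The matrix `J_k`: all entries zero except the `k`-th diagonal entry, equal to 1. -/
noncomputable def Jmat {N : ℕ} (k : Fin N) : Matrix (Fin N) (Fin N) ℝ :=
  Matrix.single k k 1

/-- Residual fluid of the D-iteration: `F 0 = B`,
`F n = (I - J_{i n} + P * J_{i n}) *ᵥ F (n-1)`. -/
noncomputable def Fvec {N : ℕ} (P : Matrix (Fin N) (Fin N) ℝ) (B : Fin N → ℝ)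
    (i : ℕ → Fin N) : ℕ → (Fin N → ℝ)
  | 0 => B
  | n + 1 =>
      ((1 : Matrix (Fin N) (Fin N) ℝ) - Jmat (i (n + 1)) + P * Jmat (i (n + 1))) *ᵥ
        Fvec P B i n

/-- History of the D-iteration: `H n = ∑_{k=1}^n J_{i k} *ᵥ F (k-1)`. -/
noncomputable def Hvec {N : ℕ} (P : Matrix (Fin N) (Fin N) ℝ) (B : Fin N → ℝ)
    (i : ℕ → Fin N) (n : ℕ) : Fin N → ℝ :=
  ∑ k ∈ Finset.range n, (Jmat (i (k + 1))) *ᵥ Fvec P B i k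

/-- for every `n ≥ 0`, `H n + F n = P ⬝ H n + B`. -/
theorem statement0 {N : ℕ} (hN : 1 ≤ N) (P : Matrix (Fin N) (Fin N) ℝ)
    (B : Fin N → ℝ) (i : ℕ → Fin N) (n : ℕ) :
    Hvec P B i n + Fvec P B i n = P *ᵥ Hvec P B i n + B := by
  induction n with
  | zero => simp [Hvec, Fvec]
  | succ n ih =>
    have hH : Hvec P B i (n + 1) = Hvec P B i n + Jmat (i (n + 1)) *ᵥ Fvec P B i n := by
      simp [Hvec, Finset.sum_range_succ]
    rw [hH, show Fvec P B i (n + 1) =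
        ((1 : Matrix (Fin N) (Fin N) ℝ) - Jmat (i (n + 1)) + P * Jmat (i (n + 1))) *ᵥ
          Fvec P B i n from rfl]
    simp only [add_mulVec, sub_mulVec, one_mulVec, Matrix.mulVec_mulVec, mulVec_add]
    have := ih
    abel_nf
    abel_nf at this
    linear_combination (norm := module) this
end

section
/- For every n ≥ 1, the history vector of the D-iteration satisfies the recursion H_n = (I − J_{i_n}(I − P))·H_{n−1} + J_{i_n}·B; that is, the explicit formula H_n = Σ_{k=1}^n J_{i_k}·F_{k−1} and this recursion define the same sequence. -/
open Matrix

lemma Hvec_succ {N : ℕ} (P : Matrix (Fin N) (Fin N) ℝ) (B : Fin N → ℝ)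
    (i : ℕ → Fin N) (n : ℕ) :
    Hvec P B i (n + 1) = Hvec P B i n + Jmat (i (n + 1)) *ᵥ Fvec P B i n := by
  simp [Hvec, Finset.sum_range_succ]

lemma Fvec_eq {N : ℕ} (P : Matrix (Fin N) (Fin N) ℝ) (B : Fin N → ℝ)
    (i : ℕ → Fin N) (n : ℕ) :
    Fvec P B i n = B - ((1 : Matrix (Fin N) (Fin N) ℝ) - P) *ᵥ Hvec P B i n := by
  induction n with
  | zero => simp [Fvec, Hvec]
  | succ n ih =>
      rw [Hvec_succ, Fvec, ih]
      simp only [Matrix.mulVec_add, Matrix.add_mulVec, Matrix.sub_mulVec,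
        Matrix.one_mulVec, ← Matrix.mulVec_mulVec]
      abel

/-- for every `n ≥ 1`,
`H n = (I - J_{i n} (I - P)) *ᵥ H (n-1) + J_{i n} *ᵥ B`. -/
theorem statement1 {N : ℕ} (hN : 1 ≤ N) (P : Matrix (Fin N) (Fin N) ℝ)
    (B : Fin N → ℝ) (i : ℕ → Fin N) (n : ℕ) :
    Hvec P B i (n + 1) =
      ((1 : Matrix (Fin N) (Fin N) ℝ) -
          Jmat (i (n + 1)) * ((1 : Matrix (Fin N) (Fin N) ℝ) - P)) *ᵥ Hvec P B i n +
        Jmat (i (n + 1)) *ᵥ B := by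
  rw [Hvec_succ, Fvec_eq]
  simp only [Matrix.mulVec_sub, Matrix.sub_mulVec, Matrix.one_mulVec, ← Matrix.mulVec_mulVec]
  abel
end

section
/- Suppose P is column-stochastic. Fix n ≥ 0, let j = i_{n+1}, f = (F_n)_j, and let Δ = { i ∈ {1,…,N} : (F_n)_i · f < 0 } be the set of nodes whose fluid has sign opposite to f. Then the L1 norm after one diffusion step satisfies the exact identity |F_{n+1}| = |F_n| + Σ_{i∈Δ} ( |(F_n)_i + f·p_{ij}| − |(F_n)_i| − |f|·p_{ij} ). -/
open Matrix

lemma Fvec_succ {N : ℕ} (P : Matrix (Fin N) (Fin N) ℝ) (B : Fin N → ℝ)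
    (i : ℕ → Fin N) (n : ℕ) (a : Fin N) :
    Fvec P B i (n + 1) a = Fvec P B i n a
      - (if a = i (n + 1) then Fvec P B i n (i (n + 1)) else 0)
      + P a (i (n + 1)) * Fvec P B i n (i (n + 1)) := by
  show (((1 : Matrix (Fin N) (Fin N) ℝ) - Jmat (i (n + 1)) + P * Jmat (i (n + 1))) *ᵥ
      Fvec P B i n) a = _
  simp only [Matrix.mulVec, dotProduct, Matrix.add_apply, Matrix.sub_apply,
    Matrix.one_apply, Jmat, Matrix.mul_apply, Matrix.single, of_apply,
    ite_and, mul_ite, mul_one, mul_zero, ite_mul, zero_mul, sub_mul, add_mul]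
  rw [Finset.sum_add_distrib, Finset.sum_sub_distrib]
  congr 1
  · by_cases h : a = i (n+1) <;> simp [h, eq_comm]
  · simp [Finset.sum_ite_eq]

lemma abs_add_mul_of_nonneg (x y p : ℝ) (hxy : 0 ≤ x * y) (hp : 0 ≤ p) :
    |x + p * y| = |x| + p * |y| := by
  rcases lt_trichotomy y 0 with hy | hy | hy
  · have hx : x ≤ 0 := by nlinarith
    rw [abs_of_nonpos hx, abs_of_nonpos hy.le, abs_of_nonpos (by nlinarith : x + p * y ≤ 0)]
    ring
  · simp [hy]
  · have hx : 0 ≤ x := by nlinarith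
    rw [abs_of_nonneg hx, abs_of_nonneg hy.le, abs_of_nonneg (by nlinarith : 0 ≤ x + p * y)]

/-- exact identity for the L1 norm after one diffusion step.
With `j = i (n+1)`, `f = (F n) j` and `Δ = {a : (F n) a * f < 0}`,
`|F (n+1)| = |F n| + ∑_{a ∈ Δ} (|(F n) a + f p_{a j}| - |(F n) a| - |f| p_{a j})`. -/
theorem statement3 {N : ℕ} (hN : 1 ≤ N) (P : Matrix (Fin N) (Fin N) ℝ)
    (B : Fin N → ℝ) (i : ℕ → Fin N)
    (hPnn : ∀ a b, 0 ≤ P a b) (hPcol : ∀ b, ∑ a, P a b = 1) (n : ℕ) :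
    (∑ a, |Fvec P B i (n + 1) a|) =
      (∑ a, |Fvec P B i n a|) +
        ∑ a ∈ Finset.univ.filter
            (fun a => Fvec P B i n a * Fvec P B i n (i (n + 1)) < 0),
          (|Fvec P B i n a + Fvec P B i n (i (n + 1)) * P a (i (n + 1))| -
            |Fvec P B i n a| - |Fvec P B i n (i (n + 1))| * P a (i (n + 1))) := by
  set j := i (n + 1) with hj
  set g := Fvec P B i n with hg
  set f := g j with hf
  have key : ∀ a : Fin N, |Fvec P B i (n + 1) a| =
      (|g a| + if g a * f < 0 then
          (|g a + f * P a j| - |g a| - |f| * P a j) else 0)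
        + (|f| * P a j - if a = j then |f| else 0) := by
    intro a
    rw [Fvec_succ, ← hg, ← hj, ← hf]
    by_cases haj : a = j
    · have hff : ¬ (g a * f < 0) := by
        rw [haj, hf]; nlinarith [mul_self_nonneg (g j)]
      simp only [if_pos haj, hff, if_false]
      rw [haj]
      rw [show g j - f + P j j * f = P j j * f by ring, abs_mul,
        abs_of_nonneg (hPnn j j), hf]
      ring
    · simp only [if_neg haj, sub_zero]
      by_cases hΔ : g a * f < 0
      · simp only [if_pos hΔ, if_neg haj]
        rw [show g a + f * P a j = g a + P a j * f by ring]
        ring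
      · simp only [if_neg hΔ, if_neg haj]
        rw [abs_add_mul_of_nonneg (g a) f (P a j) (not_lt.1 hΔ) (hPnn a j)]
        ring
  calc (∑ a, |Fvec P B i (n + 1) a|)
      = (∑ a, ((|g a| + if g a * f < 0 then
            (|g a + f * P a j| - |g a| - |f| * P a j) else 0)
          + (|f| * P a j - if a = j then |f| else 0))) := by
        exact Finset.sum_congr rfl fun a _ => key a
    _ = (∑ a, (|g a| + if g a * f < 0 then
            (|g a + f * P a j| - |g a| - |f| * P a j) else 0))
          + ((∑ a, |f| * P a j) - ∑ a : Fin N, if a = j then |f| else 0) := by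
        rw [Finset.sum_add_distrib, Finset.sum_sub_distrib]
    _ = (∑ a, |g a|) + (∑ a ∈ Finset.univ.filter (fun a => g a * f < 0),
            (|g a + f * P a j| - |g a| - |f| * P a j)) := by
        rw [Finset.sum_add_distrib, ← Finset.mul_sum, hPcol, Finset.sum_ite_eq']
        simp only [mul_one, Finset.mem_univ, if_true, sub_self, add_zero,
          Finset.sum_filter]
end

section
/- Suppose P is column-stochastic. Then the L1 norm of the residual fluid is non-increasing along the D-iteration: for every n ≥ 0, |F_{n+1}| ≤ |F_n|. -/
open Matrix

/-- if `P` is column-stochastic, the L1 norm of the residual fluid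
is non-increasing: `|F (n+1)| ≤ |F n|` for every `n ≥ 0`. -/
theorem statement4 {N : ℕ} (hN : 1 ≤ N) (P : Matrix (Fin N) (Fin N) ℝ)
    (B : Fin N → ℝ) (i : ℕ → Fin N)
    (hPnn : ∀ a b, 0 ≤ P a b) (hPcol : ∀ b, ∑ a, P a b = 1) (n : ℕ) :
    (∑ a, |Fvec P B i (n + 1) a|) ≤ ∑ a, |Fvec P B i n a| := by
  set k := i (n + 1) with hk
  set f := Fvec P B i n with hf
  have hF : ∀ a, Fvec P B i (n + 1) a
      = (f a - (if a = k then f k else 0)) + P a k * f k := by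
    intro a
    show (((1 : Matrix (Fin N) (Fin N) ℝ) - Jmat k + P * Jmat k) *ᵥ f) a = _
    simp [Matrix.add_mulVec, Matrix.sub_mulVec, Matrix.mulVec, dotProduct,
      Jmat, Matrix.single, Matrix.one_apply, Matrix.mul_apply,
      Finset.sum_ite_eq, ite_and, mul_comm, mul_add, mul_sub, mul_ite, mul_one, mul_zero,
      Finset.sum_add_distrib, Finset.sum_sub_distrib]
    by_cases h : a = k <;> simp [h, eq_comm, mul_comm] <;> ring
  calc ∑ a, |Fvec P B i (n + 1) a|
      ≤ ∑ a, (|f a - (if a = k then f k else 0)| + P a k * |f k|) := by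
        apply Finset.sum_le_sum
        intro a _
        rw [hF a]
        calc |(f a - (if a = k then f k else 0)) + P a k * f k|
            ≤ |f a - (if a = k then f k else 0)| + |P a k * f k| := abs_add_le _ _
          _ = _ := by rw [abs_mul, abs_of_nonneg (hPnn a k)]
    _ = (∑ a, |f a - (if a = k then f k else 0)|) + (∑ a, P a k) * |f k| := by
        rw [Finset.sum_add_distrib, ← Finset.sum_mul]
    _ = (∑ a, |f a - (if a = k then f k else 0)|) + |f k| := by rw [hPcol k, one_mul]
    _ = ((∑ a, |f a|) - |f k|) + |f k| := by
        congr 1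
        have : ∀ a : Fin N, |f a - (if a = k then f k else 0)|
            = |f a| - (if a = k then |f k| else 0) := by
          intro a
          by_cases h : a = k <;> simp [h]
        simp_rw [this]
        rw [Finset.sum_sub_distrib, Finset.sum_ite_eq' Finset.univ k fun _ => |f k|]
        simp
    _ = ∑ a, |f a| := by ring
end

section
/- Suppose P is column-stochastic and irreducible. Then there exists a constant w > 0 (depending only on P) such that for every vector F ∈ ℝ^N with σ(F) = 0 and F ≠ 0, there exists a finite sequence of at most N diffusion steps starting from F after which the resulting residual vector F′ satisfies |F′| ≤ |F| − w·max_i |F_i|; in particular |F′| ≤ (1 − w/N)·|F|. -/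
open Matrix

/-- `diffuse P seq m F` is the result of applying `m` diffusion steps to `F`,
at the nodes `seq 0, …, seq (m-1)`. -/
noncomputable def diffuse {N : ℕ} (P : Matrix (Fin N) (Fin N) ℝ) (seq : ℕ → Fin N) :
    ℕ → (Fin N → ℝ) → (Fin N → ℝ)
  | 0, F => F
  | m + 1, F =>
      ((1 : Matrix (Fin N) (Fin N) ℝ) - Jmat (seq m) + P * Jmat (seq m)) *ᵥ
        diffuse P seq m F

noncomputable def dstep {N : ℕ} (P : Matrix (Fin N) (Fin N) ℝ) (j : Fin N) (G : Fin N → ℝ) :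
    Fin N → ℝ :=
  fun i => if i = j then P j j * G j else G i + P i j * G j

lemma dstep_eq {N : ℕ} (P : Matrix (Fin N) (Fin N) ℝ) (j : Fin N) (G : Fin N → ℝ) :
    ((1 : Matrix (Fin N) (Fin N) ℝ) - Jmat j + P * Jmat j) *ᵥ G = dstep P j G := by
  funext i
  show ∑ l, ((1 : Matrix (Fin N) (Fin N) ℝ) - Jmat j + P * Jmat j) i l * G l = _
  have hA : ∀ l, ((1 : Matrix (Fin N) (Fin N) ℝ) - Jmat j + P * Jmat j) i l * G l =
      (if i = l then G l else 0) +
        ((if j = l then P i j * G l else 0) - (if j = l then (if j = i then G l else 0) else 0)) := by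
    intro l
    simp only [Matrix.add_apply, Matrix.sub_apply, Matrix.one_apply, Jmat,
      Matrix.mul_apply, Matrix.single, Matrix.of_apply]
    have hsum : (∑ x, P i x * if j = x ∧ j = l then 1 else 0) = if j = l then P i j else 0 := by
      by_cases h : j = l <;> simp [h, mul_ite, Finset.sum_ite_eq]
    rw [hsum]
    split_ifs <;> simp_all <;> ring
  rw [Finset.sum_congr rfl fun l _ => hA l]
  rw [Finset.sum_add_distrib, Finset.sum_sub_distrib]
  simp only [Finset.sum_ite_eq, Finset.mem_univ, if_true, dstep]
  by_cases h : i = j <;> simp [h, show i ≠ j → j ≠ i from fun a b => a b.symm] <;> ring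

lemma diffuse_succ {N : ℕ} (P : Matrix (Fin N) (Fin N) ℝ) (seq : ℕ → Fin N) (m : ℕ)
    (F : Fin N → ℝ) :
    diffuse P seq (m + 1) F = dstep P (seq m) (diffuse P seq m F) := by
  rw [diffuse, dstep_eq]

section lemmas
variable {N : ℕ} {P : Matrix (Fin N) (Fin N) ℝ}

/-- The majorant `g i` used to bound `|dstep P j G i|`. -/
private lemma sum_majorant (hPcol : ∀ b, ∑ a, P a b = 1) (j : Fin N) (G : Fin N → ℝ) :
    (∑ i, ((if i = j then 0 else |G i|) + P i j * |G j|)) = ∑ i, |G i| := by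
  rw [Finset.sum_add_distrib, ← Finset.sum_mul, hPcol j, one_mul]
  have : (∑ i, (if i = j then (0:ℝ) else |G i|)) = (∑ i, |G i|) - |G j| := by
    rw [eq_sub_iff_add_eq]
    have : ∀ i : Fin N, (if i = j then (0:ℝ) else |G i|) = |G i| - (if i = j then |G i| else 0) := by
      intro i; split_ifs <;> ring
    rw [Finset.sum_congr rfl fun i _ => this i, Finset.sum_sub_distrib,
      Finset.sum_ite_eq' Finset.univ j fun i => |G i|]
    simp
  rw [this]; ring

private lemma abs_dstep_le (hPnn : ∀ a b, 0 ≤ P a b) (j : Fin N) (G : Fin N → ℝ) (i : Fin N) :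
    |dstep P j G i| ≤ (if i = j then 0 else |G i|) + P i j * |G j| := by
  unfold dstep
  by_cases h : i = j
  · subst h
    simp only [if_true, zero_add, abs_mul, abs_of_nonneg (hPnn i i), le_refl]
  · simp only [if_neg h]
    calc |G i + P i j * G j| ≤ |G i| + |P i j * G j| := abs_add_le _ _
    _ = |G i| + P i j * |G j| := by rw [abs_mul, abs_of_nonneg (hPnn i j)]

/-- Lemma A: diffusion never increases the L¹ norm. -/
lemma sum_abs_dstep_le (hPnn : ∀ a b, 0 ≤ P a b) (hPcol : ∀ b, ∑ a, P a b = 1)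
    (j : Fin N) (G : Fin N → ℝ) :
    (∑ i, |dstep P j G i|) ≤ ∑ i, |G i| := by
  calc (∑ i, |dstep P j G i|) ≤ ∑ i, ((if i = j then 0 else |G i|) + P i j * |G j|) :=
        Finset.sum_le_sum fun i _ => abs_dstep_le hPnn j G i
  _ = ∑ i, |G i| := sum_majorant hPcol j G

/-- Lemma B: strict decrease in the presence of cancellation. -/
lemma sum_abs_dstep_lt (hPnn : ∀ a b, 0 ≤ P a b) (hPcol : ∀ b, ∑ a, P a b = 1)
    {j b : Fin N} {G : Fin N → ℝ} (hGj : 0 < G j) (hGb : G b < 0) (hPbj : 0 < P b j)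
    (hbj : b ≠ j) :
    (∑ i, |dstep P j G i|) < ∑ i, |G i| := by
  have key : |dstep P j G b| < (if b = j then 0 else |G b|) + P b j * |G j| := by
    rw [if_neg hbj]
    unfold dstep
    rw [if_neg hbj]
    set x := G b
    set y := P b j * G j
    have hy : 0 < y := mul_pos hPbj hGj
    have hx : |x| = -x := abs_of_neg hGb
    have hYy : |G j| = G j := abs_of_pos hGj
    rw [hx]
    have : P b j * |G j| = y := by rw [hYy]
    rw [this]
    rcases le_or_gt 0 (x + y) with h | h
    · rw [abs_of_nonneg h]; linarith
    · rw [abs_of_neg h]; linarith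
  calc (∑ i, |dstep P j G i|)
      < ∑ i, ((if i = j then 0 else |G i|) + P i j * |G j|) := by
        apply Finset.sum_lt_sum (fun i _ => abs_dstep_le hPnn j G i)
        exact ⟨b, Finset.mem_univ b, key⟩
  _ = ∑ i, |G i| := sum_majorant hPcol j G

end lemmas

section walk
variable {N : ℕ} {P : Matrix (Fin N) (Fin N) ℝ}

def IsWalk (P : Matrix (Fin N) (Fin N) ℝ) (a b : Fin N) (w : ℕ → Fin N) (n : ℕ) : Prop :=
  w 0 = a ∧ w n = b ∧ ∀ i < n, 0 < P (w (i + 1)) (w i)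

lemma pow_entry_nonneg (hPnn : ∀ a b, 0 ≤ P a b) (n : ℕ) (hn : 1 ≤ n) (a b : Fin N) :
    0 ≤ (P ^ n) a b := by
  induction n generalizing a b with
  | zero => omega
  | succ m ih =>
    rcases Nat.eq_zero_or_pos m with hm | hm
    · subst hm; simpa [pow_one] using hPnn a b
    · rw [pow_succ, Matrix.mul_apply]
      exact Finset.sum_nonneg fun c _ => mul_nonneg (ih hm a c) (hPnn c b)

lemma walk_of_pow_pos (hPnn : ∀ a b, 0 ≤ P a b) :
    ∀ n, 1 ≤ n → ∀ a b : Fin N, 0 < (P ^ n) b a → ∃ w : ℕ → Fin N, IsWalk P a b w n := by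
  intro n
  induction n with
  | zero => omega
  | succ m ih =>
    intro _ a b hpos
    rcases Nat.eq_zero_or_pos m with hm | hm
    · subst hm
      refine ⟨fun i => if i = 0 then a else b, by simp, by simp, ?_⟩
      intro i hi
      interval_cases i
      simpa using (by simpa [pow_one] using hpos)
    · rw [pow_succ', Matrix.mul_apply] at hpos
      -- (P^(m+1)) b a = ∑ c, P b c * (P^m) c a ??? check orientation
      obtain ⟨c, _, hc⟩ : ∃ c ∈ Finset.univ, 0 < P b c * (P ^ m) c a := by
        by_contra hcon
        push_neg at hcon
        have : (∑ c, P b c * (P ^ m) c a) ≤ 0 :=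
          Finset.sum_nonpos fun c hcmem => hcon c hcmem
        linarith
      have hPbc : 0 < P b c := by
        rcases lt_or_ge 0 (P b c) with h | h
        · exact h
        · exfalso
          have h0 : P b c = 0 := le_antisymm h (hPnn b c)
          rw [h0, zero_mul] at hc; exact lt_irrefl 0 hc
      have hPm : 0 < (P ^ m) c a := by
        by_contra h
        push_neg at h
        have h0 : (P ^ m) c a = 0 := le_antisymm h (pow_entry_nonneg hPnn m hm c a)
        rw [h0, mul_zero] at hc; exact lt_irrefl 0 hc
      obtain ⟨w, hw0, hwm, hwe⟩ := ih hm a c hPm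
      refine ⟨fun i => if i = m + 1 then b else w i, ?_, ?_, ?_⟩
      · simp only [Nat.succ_ne_zero]
        simpa using hw0
      · simp
      · intro i hi
        rcases Nat.lt_or_ge i m with h | h
        · have h1 : i + 1 ≠ m + 1 := by omega
          have h2 : i ≠ m + 1 := by omega
          simpa [h1, h2, show i ≠ m by omega] using hwe i h
        · have him : i = m := by omega
          subst him
          have h2 : i ≠ i + 1 := by omega
          simp only [if_pos rfl, if_neg h2, hwm]
          exact hPbc
end walk

section shorten
variable {N : ℕ} {P : Matrix (Fin N) (Fin N) ℝ}

lemma walk_shorten (hN : 0 < N) {a b : Fin N} (hab : a ≠ b) :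
    ∀ n, (∃ w, IsWalk P a b w n) → ∃ k w, 1 ≤ k ∧ k ≤ N ∧ IsWalk P a b w k := by
  intro n
  induction n using Nat.strong_induction_on with
  | _ n ih =>
    rintro ⟨w, hw0, hwn, hwe⟩
    rcases le_or_gt n N with hle | hgt
    · have hn1 : 1 ≤ n := by
        by_contra h
        push_neg at h
        interval_cases n
        exact hab (hw0 ▸ hwn ▸ rfl)
      exact ⟨n, w, hn1, hle, hw0, hwn, hwe⟩
    · -- pigeonhole among w 0, ..., w N
      obtain ⟨i, j, hij, hwij⟩ :
          ∃ i j : Fin (N + 1), i ≠ j ∧ w i = w j := by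
        have hcard : Fintype.card (Fin N) < Fintype.card (Fin (N + 1)) := by simp
        obtain ⟨i, j, hij, h⟩ :=
          Fintype.exists_ne_map_eq_of_card_lt (fun i : Fin (N + 1) => w i) hcard
        exact ⟨i, j, hij, h⟩
      -- wlog i < j, as naturals
      obtain ⟨i', j', hlt, heq⟩ : ∃ i' j' : ℕ, i' < j' ∧ j' ≤ N ∧ w i' = w j' := by
        rcases lt_or_gt_of_ne hij with h | h
        · exact ⟨i, j, h, by omega, hwij⟩
        · exact ⟨j, i, h, by omega, hwij.symm⟩
      obtain ⟨hj'N, hwi'j'⟩ := heq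
      set d := j' - i' with hd
      have hd1 : 1 ≤ d := by omega
      set w' : ℕ → Fin N := fun m => if m ≤ i' then w m else w (m + d) with hw'
      have hlen : n - d < n := by omega
      apply ih (n - d) hlen
      refine ⟨w', ?_, ?_, ?_⟩
      · simp [hw', Nat.zero_le, hw0]
      · have h1 : ¬ (n - d ≤ i') := by omega
        simp only [hw', if_neg h1]
        have : n - d + d = n := by omega
        rw [this, hwn]
      · intro m hm
        rcases Nat.lt_or_ge m i' with h | h
        · have h1 : m ≤ i' := by omega
          have h2 : m + 1 ≤ i' := by omega
          simp only [hw', if_pos h1, if_pos h2]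
          exact hwe m (by omega)
        · rcases Nat.eq_or_lt_of_le h with h' | h'
          · -- m = i'
            have h1 : m ≤ i' := by omega
            have h2 : ¬ (m + 1 ≤ i') := by omega
            simp only [hw', if_pos h1, if_neg h2]
            have : m + 1 + d = j' + 1 := by omega
            rw [this, ← h', hwi'j']
            exact hwe j' (by omega)
          · have h1 : ¬ (m ≤ i') := by omega
            have h2 : ¬ (m + 1 ≤ i') := by omega
            simp only [hw', if_neg h1, if_neg h2]
            have : m + 1 + d = m + d + 1 := by omega
            rw [this]
            exact hwe (m + d) (by omega)
end shorten

section pointwise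
variable {N : ℕ} {P : Matrix (Fin N) (Fin N) ℝ}

lemma pointwise_decrease (hN : 0 < N)
    (hPnn : ∀ a b, 0 ≤ P a b) (hPcol : ∀ b, ∑ a, P a b = 1)
    (hirr : ∀ a b, ∃ n : ℕ, 1 ≤ n ∧ 0 < (P ^ n) a b)
    (F : Fin N → ℝ) (hsum : (∑ a, F a) = 0) (hne : F ≠ 0) :
    ∃ seq : ℕ → Fin N, (∑ a, |diffuse P seq N F a|) < ∑ a, |F a| := by
  obtain ⟨a, ha⟩ : ∃ a, 0 < F a := by
    by_contra h
    push_neg at h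
    have h0 := (Finset.sum_eq_zero_iff_of_nonpos fun i _ => h i).1 hsum
    exact hne (funext fun i => h0 i (Finset.mem_univ i))
  obtain ⟨b, hb⟩ : ∃ b, F b < 0 := by
    by_contra h
    push_neg at h
    have h0 := (Finset.sum_eq_zero_iff_of_nonneg fun i _ => h i).1 hsum
    exact hne (funext fun i => h0 i (Finset.mem_univ i))
  have hab : a ≠ b := fun h => absurd (h ▸ ha) (not_lt.2 hb.le)
  obtain ⟨n, hn1, hnpos⟩ := hirr b a
  obtain ⟨w0, hw0walk⟩ := walk_of_pow_pos hPnn n hn1 a b hnpos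
  obtain ⟨k, w, hk1, hkN, hw0, hwk, hwe⟩ := walk_shorten hN hab n ⟨w0, hw0walk⟩
  refine ⟨w, ?_⟩
  have key : ∀ m, m ≤ k →
      (∑ i, |diffuse P w m F i|) < (∑ i, |F i|) ∨
      ((∑ i, |diffuse P w m F i|) ≤ (∑ i, |F i|) ∧
        0 < diffuse P w m F (w m) ∧ diffuse P w m F b < 0) := by
    intro m
    induction m with
    | zero =>
      intro _
      right
      exact ⟨le_refl _, by rw [hw0]; exact ha, hb⟩
    | succ m ihm =>
      intro hmk
      have hm : m ≤ k := by omega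
      have hmlt : m < k := by omega
      rw [diffuse_succ]
      set G := diffuse P w m F with hG
      rcases ihm hm with hlt | ⟨hle, hpos, hneg⟩
      · left
        exact lt_of_le_of_lt (sum_abs_dstep_le hPnn hPcol (w m) G) hlt
      · set j := w m with hj
        by_cases hstrict : (∑ i, |dstep P j G i|) < ∑ i, |G i|
        · left; exact lt_of_lt_of_le hstrict hle
        · push_neg at hstrict
          have hb_ne_j : b ≠ j := fun h => absurd (h ▸ hneg) (not_lt.2 hpos.le)
          have hPbj0 : P b j = 0 := by
            by_contra h
            have hp : 0 < P b j := lt_of_le_of_ne (hPnn b j) (Ne.symm h)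
            exact absurd (sum_abs_dstep_lt hPnn hPcol hpos hneg hp hb_ne_j)
              (not_lt.2 hstrict)
          have hnewb : dstep P j G b = G b := by
            unfold dstep; rw [if_neg hb_ne_j, hPbj0]; ring
          have hedge : 0 < P (w (m + 1)) (w m) := hwe m hmlt
          right
          refine ⟨le_trans (sum_abs_dstep_le hPnn hPcol j G) hle, ?_,
            by rw [hnewb]; exact hneg⟩
          by_cases hij : w (m + 1) = j
          · show 0 < dstep P j G (w (m + 1))
            unfold dstep
            rw [if_pos hij]
            have : 0 < P j j := by rw [hij] at hedge; exact hedge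
            exact mul_pos this hpos
          · have hGi : 0 ≤ G (w (m + 1)) := by
              by_contra h
              push_neg at h
              exact absurd (sum_abs_dstep_lt hPnn hPcol hpos h hedge hij)
                (not_lt.2 hstrict)
            show 0 < dstep P j G (w (m + 1))
            unfold dstep
            rw [if_neg hij]
            exact add_pos_of_nonneg_of_pos hGi (mul_pos hedge hpos)
  have hkey : (∑ i, |diffuse P w k F i|) < ∑ i, |F i| := by
    rcases key k (le_refl k) with h | ⟨_, hpos, hneg⟩
    · exact h
    · rw [hwk] at hpos
      exact absurd hneg (not_lt.2 hpos.le)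
  have hext : ∀ p, (∑ i, |diffuse P w (k + p) F i|) ≤ ∑ i, |diffuse P w k F i| := by
    intro p
    induction p with
    | zero => exact le_refl _
    | succ p ihp =>
      have : k + (p + 1) = (k + p) + 1 := by omega
      rw [this, diffuse_succ]
      exact le_trans (sum_abs_dstep_le hPnn hPcol _ _) ihp
  have hNk : k + (N - k) = N := by omega
  have := hext (N - k)
  rw [hNk] at this
  exact lt_of_le_of_lt this hkey
end pointwise

section final
variable {N : ℕ}

noncomputable def extSeq (hN : 0 < N) (s : Fin N → Fin N) : ℕ → Fin N :=
  fun i => s ⟨i % N, Nat.mod_lt i hN⟩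

lemma diffuse_congr (P : Matrix (Fin N) (Fin N) ℝ) {seq1 seq2 : ℕ → Fin N} (m : ℕ)
    (h : ∀ i < m, seq1 i = seq2 i) (F : Fin N → ℝ) :
    diffuse P seq1 m F = diffuse P seq2 m F := by
  induction m with
  | zero => rfl
  | succ m ih =>
    rw [diffuse_succ, diffuse_succ, h m (by omega),
      ih fun i hi => h i (by omega)]

lemma diffuse_smul (P : Matrix (Fin N) (Fin N) ℝ) (seq : ℕ → Fin N) (m : ℕ) (t : ℝ)
    (F : Fin N → ℝ) :
    diffuse P seq m (t • F) = t • diffuse P seq m F := by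
  induction m with
  | zero => rfl
  | succ m ih =>
    show _ *ᵥ diffuse P seq m (t • F) = t • (_ *ᵥ diffuse P seq m F)
    rw [ih, Matrix.mulVec_smul]

lemma diffuse_continuous (P : Matrix (Fin N) (Fin N) ℝ) (seq : ℕ → Fin N) (m : ℕ) :
    Continuous fun F : Fin N → ℝ => diffuse P seq m F := by
  induction m with
  | zero => exact continuous_id
  | succ m ih =>
    show Continuous fun F => _ *ᵥ diffuse P seq m F
    apply continuous_pi
    intro i
    show Continuous fun F => ∑ l, _ * diffuse P seq m F l
    exact continuous_finset_sum _ fun l _ =>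
      continuous_const.mul ((continuous_apply l).comp ih)

lemma sum_abs_pos {F : Fin N → ℝ} (hne : F ≠ 0) : 0 < ∑ a, |F a| := by
  obtain ⟨c, hc⟩ : ∃ c, F c ≠ 0 := by
    by_contra h
    push_neg at h
    exact hne (funext h)
  exact Finset.sum_pos' (fun i _ => abs_nonneg _)
    ⟨c, Finset.mem_univ c, abs_pos.2 hc⟩

end final

/-- if `P` is column-stochastic and irreducible, there is `w > 0` such
that from any nonzero `F` with `σ(F) = 0`, at most `N` diffusion steps reach `F'` with
`|F'| ≤ |F| - w * max_a |F a|`; in particular `|F'| ≤ (1 - w/N) * |F|`. -/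
theorem statement6 {N : ℕ} (hN : 0 < N) (P : Matrix (Fin N) (Fin N) ℝ)
    (hPnn : ∀ a b, 0 ≤ P a b) (hPcol : ∀ b, ∑ a, P a b = 1)
    (hirr : ∀ a b, ∃ n : ℕ, 1 ≤ n ∧ 0 < (P ^ n) a b) :
    ∃ w : ℝ, 0 < w ∧
      ∀ F : Fin N → ℝ, (∑ a, F a) = 0 → F ≠ 0 →
        ∃ (m : ℕ) (seq : ℕ → Fin N), m ≤ N ∧
          (∑ a, |diffuse P seq m F a|) ≤
              (∑ a, |F a|) -
                w * ((Finset.univ : Finset (Fin N)).sup'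
                  ⟨⟨0, hN⟩, Finset.mem_univ _⟩ fun a => |F a|) ∧
          (∑ a, |diffuse P seq m F a|) ≤ (1 - w / N) * (∑ a, |F a|) := by
  classical
  set K : Set (Fin N → ℝ) := {F | (∑ a, F a) = 0 ∧ (∑ a, |F a|) = 1} with hK
  -- normalization map into K
  have hnorm : ∀ F : Fin N → ℝ, (∑ a, F a) = 0 → F ≠ 0 →
      ((∑ a, |F a|)⁻¹ • F) ∈ K := by
    intro F hsum hne
    have ht : 0 < ∑ a, |F a| := sum_abs_pos hne
    constructor
    · show (∑ a, (∑ a, |F a|)⁻¹ * F a) = 0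
      rw [← Finset.mul_sum, hsum, mul_zero]
    · show (∑ a, |(∑ a, |F a|)⁻¹ * F a|) = 1
      have : ∀ a, |(∑ a, |F a|)⁻¹ * F a| = (∑ a, |F a|)⁻¹ * |F a| := by
        intro a
        rw [abs_mul, abs_of_pos (inv_pos.2 ht)]
      rw [Finset.sum_congr rfl fun a _ => this a, ← Finset.mul_sum,
        inv_mul_cancel₀ (ne_of_gt ht)]
  by_cases hKne : K.Nonempty
  swap
  · refine ⟨1, one_pos, fun F hsum hne => absurd ⟨_, hnorm F hsum hne⟩ hKne⟩
  · -- the inf over all length-N diffusion schedules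
    have hne' : Nonempty (Fin N → Fin N) := ⟨fun _ => ⟨0, hN⟩⟩
    have huniv : (Finset.univ : Finset (Fin N → Fin N)).Nonempty :=
      Finset.univ_nonempty
    set g : (Fin N → ℝ) → ℝ := fun F =>
      Finset.univ.inf' huniv fun s => ∑ a, |diffuse P (extSeq hN s) N F a| with hg
    have hgcont : Continuous g := by
      apply Continuous.finset_inf'_apply
      intro s _
      exact continuous_finset_sum _ fun a _ =>
        continuous_abs.comp ((continuous_apply a).comp (diffuse_continuous P (extSeq hN s) N))
    have hgdec : ∀ F ∈ K, g F < 1 := by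
      rintro F ⟨hsum, habs⟩
      have hne : F ≠ 0 := by
        intro h
        rw [h] at habs
        simp at habs
      obtain ⟨seq, hseq⟩ := pointwise_decrease hN hPnn hPcol hirr F hsum hne
      set s : Fin N → Fin N := fun i => seq i with hs
      have : diffuse P (extSeq hN s) N F = diffuse P seq N F := by
        apply diffuse_congr
        intro i hi
        show s ⟨i % N, _⟩ = seq i
        rw [hs]
        simp [Nat.mod_eq_of_lt hi]
      calc g F ≤ ∑ a, |diffuse P (extSeq hN s) N F a| :=
            Finset.inf'_le _ (Finset.mem_univ s)
        _ < 1 := by rw [this, ← habs] at *; exact hseq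
    -- compactness
    have hKcpt : IsCompact K := by
      have hclosed : IsClosed K := by
        have h1 : IsClosed {F : Fin N → ℝ | (∑ a, F a) = 0} :=
          isClosed_eq (continuous_finset_sum _ fun a _ => continuous_apply a)
            continuous_const
        have h2 : IsClosed {F : Fin N → ℝ | (∑ a, |F a|) = 1} :=
          isClosed_eq (continuous_finset_sum _ fun a _ =>
            continuous_abs.comp (continuous_apply a)) continuous_const
        exact h1.inter h2
      apply (isCompact_closedBall (0 : Fin N → ℝ) 1).of_isClosed_subset hclosed
      rintro F ⟨_, habs⟩
      rw [Metric.mem_closedBall, dist_zero_right]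
      rw [pi_norm_le_iff_of_nonneg zero_le_one]
      intro i
      rw [Real.norm_eq_abs, ← habs]
      exact Finset.single_le_sum (fun a _ => abs_nonneg (F a)) (Finset.mem_univ i)
    obtain ⟨x0, hx0K, hx0max⟩ := hKcpt.exists_isMaxOn hKne hgcont.continuousOn
    set c : ℝ := g x0 with hc
    have hclt : c < 1 := hgdec x0 hx0K
    refine ⟨1 - c, by linarith, ?_⟩
    intro F hsum hne
    have ht : 0 < ∑ a, |F a| := sum_abs_pos hne
    set t : ℝ := ∑ a, |F a| with htdef
    set F₀ : Fin N → ℝ := t⁻¹ • F with hF₀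
    have hF₀K : F₀ ∈ K := hnorm F hsum hne
    have hgF₀ : g F₀ ≤ c := hx0max hF₀K
    obtain ⟨s, _, hs⟩ := Finset.exists_mem_eq_inf' huniv
      fun s => ∑ a, |diffuse P (extSeq hN s) N F₀ a|
    refine ⟨N, extSeq hN s, le_refl N, ?_, ?_⟩ <;>
    · have hFt : F = t • F₀ := by
        rw [hF₀, smul_smul, mul_inv_cancel₀ (ne_of_gt ht), one_smul]
      have h1 : g F₀ = ∑ a, |diffuse P (extSeq hN s) N F₀ a| := hs
      have hdiff : (∑ a, |diffuse P (extSeq hN s) N F a|) = t * g F₀ := by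
        rw [h1, hFt, diffuse_smul, Finset.mul_sum]
        refine Finset.sum_congr rfl fun a _ => ?_
        rw [Pi.smul_apply, smul_eq_mul, abs_mul, abs_of_pos ht]
      have hgF₀nn : 0 ≤ g F₀ := by
        rw [h1]
        exact Finset.sum_nonneg fun a _ => abs_nonneg _
      have hM : ((Finset.univ : Finset (Fin N)).sup'
          ⟨⟨0, hN⟩, Finset.mem_univ _⟩ fun a => |F a|) ≤ t :=
        Finset.sup'_le _ _ fun a _ =>
          Finset.single_le_sum (fun i _ => abs_nonneg (F i)) (Finset.mem_univ a)
      have h2 : t * g F₀ ≤ t * c := mul_le_mul_of_nonneg_left hgF₀ ht.le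
      have hN1 : (1 : ℝ) ≤ (N : ℝ) := by exact_mod_cast hN
      have hdivle : (1 - c) / (N : ℝ) ≤ 1 - c := div_le_self (by linarith) hN1
      rw [hdiff]
      first
      | · -- first inequality
          have h3 : (1 - c) * ((Finset.univ : Finset (Fin N)).sup'
              ⟨⟨0, hN⟩, Finset.mem_univ _⟩ fun a => |F a|) ≤ (1 - c) * t :=
            mul_le_mul_of_nonneg_left hM (by linarith)
          linarith
      | · -- second inequality
          have h4 : c ≤ 1 - (1 - c) / (N : ℝ) := by linarith
          have h5 : t * c ≤ (1 - (1 - c) / (N : ℝ)) * t := by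
            rw [mul_comm t c]
            exact mul_le_mul_of_nonneg_right h4 ht.le
          linarith
end

section
/- Let P′ ∈ ℝ^{N×N} be a matrix with nonnegative entries and let V ∈ ℝ^N be a vector with all entries strictly positive such that Vᵀ·P′ = Vᵀ (V is a left eigenvector of P′ for eigenvalue 1). If σ_V(B) = 0, then for every n ≥ 0 the D-iteration applied to (P′, B) satisfies σ_V(F_n) = 0. -/
open Matrix

/-- if `P'` is nonnegative, `V` is strictly positive with `Vᵀ P' = Vᵀ`,
and `σ_V(B) = 0`, then `σ_V(F n) = 0` for every `n ≥ 0`. -/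
theorem statement8 {N : ℕ} (hN : 1 ≤ N) (P' : Matrix (Fin N) (Fin N) ℝ)
    (B : Fin N → ℝ) (i : ℕ → Fin N) (V : Fin N → ℝ)
    (hP'nn : ∀ a b, 0 ≤ P' a b) (hV : ∀ a, 0 < V a)
    (hVeig : ∀ b, ∑ a, V a * P' a b = V b)
    (hB : ∑ a, V a * B a = 0) (n : ℕ) :
    (∑ a, V a * Fvec P' B i n a) = 0 := by
  have hVP : V ᵥ* P' = V := by
    funext b; simpa [Matrix.vecMul, dotProduct] using hVeig b
  induction n with
  | zero => simpa [Fvec] using hB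
  | succ n ih =>
    have hM : V ᵥ* ((1 : Matrix (Fin N) (Fin N) ℝ) - Jmat (i (n + 1)) + P' * Jmat (i (n + 1))) = V := by
      rw [Matrix.vecMul_add, Matrix.vecMul_sub, Matrix.vecMul_one, ← Matrix.vecMul_vecMul, hVP]
      ring
    have : V ⬝ᵥ Fvec P' B i (n + 1) = 0 := by
      show V ⬝ᵥ (((1 : Matrix (Fin N) (Fin N) ℝ) - Jmat (i (n + 1)) + P' * Jmat (i (n + 1))) *ᵥ Fvec P' B i n) = 0
      rw [Matrix.dotProduct_mulVec, hM]
      simpa [dotProduct] using ih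
    simpa [dotProduct] using this
end

section
/- Let P′ ∈ ℝ^{N×N} be a matrix with nonnegative entries and let V ∈ ℝ^N be a vector with all entries strictly positive such that Vᵀ·P′ = Vᵀ. Then the weighted norm |F_n|_V of the residual fluid of the D-iteration applied to (P′, B) is non-increasing: for every n ≥ 0, |F_{n+1}|_V ≤ |F_n|_V. -/
open Matrix

/-- if `P'` is nonnegative and `V` is strictly positive with `Vᵀ P' = Vᵀ`,
then the weighted norm `|F n|_V = ∑ a, |F n a * V a|` is non-increasing. -/
theorem statement9 {N : ℕ} (hN : 1 ≤ N) (P' : Matrix (Fin N) (Fin N) ℝ)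
    (B : Fin N → ℝ) (i : ℕ → Fin N) (V : Fin N → ℝ)
    (hP'nn : ∀ a b, 0 ≤ P' a b) (hV : ∀ a, 0 < V a)
    (hVeig : ∀ b, ∑ a, V a * P' a b = V b) (n : ℕ) :
    (∑ a, |Fvec P' B i (n + 1) a * V a|) ≤ ∑ a, |Fvec P' B i n a * V a| := by
  set k := i (n + 1) with hk
  set G := Fvec P' B i n with hG
  have hF : ∀ a, Fvec P' B i (n + 1) a = (if a = k then 0 else G a) + P' a k * G k := by
    intro a
    show (((1 : Matrix (Fin N) (Fin N) ℝ) - Jmat k + P' * Jmat k) *ᵥ G) a = _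
    rw [Matrix.add_mulVec, Matrix.sub_mulVec, Matrix.one_mulVec]
    have hJ : ∀ c : Fin N, (Jmat k *ᵥ G) c = if c = k then G k else 0 := by
      intro c
      simp [Jmat, Matrix.mulVec, dotProduct, Matrix.single,
        Finset.sum_ite_eq, ite_and, mul_ite, eq_comm]
    rw [← Matrix.mulVec_mulVec, Pi.add_apply, Pi.sub_apply, hJ]
    have : (P' *ᵥ (Jmat k *ᵥ G)) a = P' a k * G k := by
      rw [show (Jmat k *ᵥ G) = fun c => if c = k then G k else 0 from funext hJ]
      simp [Matrix.mulVec, dotProduct, mul_ite]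
    rw [this]
    by_cases h : a = k <;> simp [h] <;> ring
  calc ∑ a, |Fvec P' B i (n + 1) a * V a|
      ≤ ∑ a, ((if a = k then 0 else |G a * V a|) + P' a k * |G k| * V a) := by
        apply Finset.sum_le_sum
        intro a _
        rw [hF a, add_mul]
        refine (abs_add_le _ _).trans ?_
        gcongr
        · by_cases h : a = k <;> simp [h]
        · rw [abs_mul, abs_mul, abs_of_nonneg (hP'nn a k), abs_of_nonneg (hV a).le]
    _ = (∑ a, (if a = k then 0 else |G a * V a|)) + |G k| * ∑ a, V a * P' a k := by
        rw [Finset.sum_add_distrib, Finset.mul_sum]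
        congr 1
        apply Finset.sum_congr rfl
        intro a _; ring
    _ = (∑ a, (if a = k then 0 else |G a * V a|)) + |G k * V k| := by
        rw [hVeig k, abs_mul, abs_of_nonneg (hV k).le]
    _ = ∑ a, |G a * V a| := by
        have h : ∀ a, |G a * V a| =
            (if a = k then 0 else |G a * V a|) + (if a = k then |G k * V k| else 0) := by
          intro a; by_cases h : a = k <;> simp [h]
        rw [Finset.sum_congr rfl (fun a _ => h a), Finset.sum_add_distrib,
          Finset.sum_ite_eq' Finset.univ k, if_pos (Finset.mem_univ k)]
end

section
/- Let 0 < d < 1 and let P_g ∈ ℝ^{N×N} have nonnegative entries such that every column sum is either 1 or 0 (columns summing to 0 are the dangling nodes). Let \overline{P}_g be the column-stochastic completion of P_g obtained by replacing each zero column by e. Set f_1 = 1 − σ(P_g·e), F_0 = d·P_g·e − d·σ(P_g·e)·e, H = Σ_{i≥0} d^i·P_g^i·F_0, H′ = Σ_{i≥0} d^i·\overline{P}_g^i·F_0, f_2 = σ(H′ − P_g·H′), and f = f_1 + f_2. Then both series converge and H′ + e = ((1 − d + d·f)/(1 − d + d·f_1))·(H + e). -/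
open Matrix

namespace S12

variable {N : ℕ}

/-- ℓ¹ contraction for matrices whose column absolute sums are ≤ 1. -/
lemma l1_mulVec (M : Matrix (Fin N) (Fin N) ℝ) (h : ∀ b, ∑ a, |M a b| ≤ 1)
    (x : Fin N → ℝ) : ∑ a, |(M *ᵥ x) a| ≤ ∑ a, |x a| := by
  calc ∑ a, |(M *ᵥ x) a| ≤ ∑ a, ∑ b, |M a b * x b| := by
        refine Finset.sum_le_sum fun a _ => ?_
        exact Finset.abs_sum_le_sum_abs (fun b => M a b * x b) Finset.univ
    _ = ∑ b, (∑ a, |M a b|) * |x b| := by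
        rw [Finset.sum_comm]
        simp [abs_mul, Finset.sum_mul]
    _ ≤ ∑ b, 1 * |x b| := by
        refine Finset.sum_le_sum fun b _ => ?_
        exact mul_le_mul_of_nonneg_right (h b) (abs_nonneg _)
    _ = ∑ b, |x b| := by simp

lemma l1_pow (M : Matrix (Fin N) (Fin N) ℝ) (h : ∀ b, ∑ a, |M a b| ≤ 1)
    (x : Fin N → ℝ) (k : ℕ) : ∑ a, |((M ^ k) *ᵥ x) a| ≤ ∑ a, |x a| := by
  induction k with
  | zero => simp
  | succ n ih =>
      have : (M ^ (n+1)) *ᵥ x = M *ᵥ ((M ^ n) *ᵥ x) := by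
        rw [Matrix.mulVec_mulVec, ← pow_succ']
      rw [this]
      exact le_trans (l1_mulVec M h _) ih

lemma summable (d : ℝ) (hd0 : 0 < d) (hd1 : d < 1)
    (M : Matrix (Fin N) (Fin N) ℝ) (h : ∀ b, ∑ a, |M a b| ≤ 1) (x : Fin N → ℝ) :
    Summable (fun k : ℕ => d ^ k • ((M ^ k) *ᵥ x)) := by
  refine Summable.of_norm_bounded (g := fun k => d ^ k * ∑ a, |x a|)
    ((summable_geometric_of_lt_one hd0.le hd1).mul_right _) (fun k => ?_)
  rw [norm_smul]
  have h1 : ‖d ^ k‖ = d ^ k := by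
    rw [Real.norm_eq_abs, abs_pow, abs_of_pos hd0]
  rw [h1]
  refine mul_le_mul_of_nonneg_left ?_ (by positivity)
  rw [pi_norm_le_iff_of_nonneg (by positivity)]
  intro a
  rw [Real.norm_eq_abs]
  calc |((M ^ k) *ᵥ x) a| ≤ ∑ a, |((M ^ k) *ᵥ x) a| :=
        Finset.single_le_sum (f := fun i => |((M ^ k) *ᵥ x) i|)
          (fun i _ => abs_nonneg _) (Finset.mem_univ a)
    _ ≤ ∑ a, |x a| := l1_pow M h x k

/-- fixed point equation: `H = F0 + d • (M *ᵥ H)` -/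
lemma fixedpt (d : ℝ) (M : Matrix (Fin N) (Fin N) ℝ) (F0 : Fin N → ℝ)
    (hs : Summable (fun k : ℕ => d ^ k • ((M ^ k) *ᵥ F0))) :
    (∑' k : ℕ, d ^ k • ((M ^ k) *ᵥ F0)) =
      F0 + d • (M *ᵥ (∑' k : ℕ, d ^ k • ((M ^ k) *ᵥ F0))) := by
  set H := ∑' k : ℕ, d ^ k • ((M ^ k) *ᵥ F0) with hH
  let L : (Fin N → ℝ) →L[ℝ] (Fin N → ℝ) :=
    LinearMap.toContinuousLinearMap (d • M.mulVecLin)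
  have hL : ∀ x, L x = d • (M *ᵥ x) := fun x => rfl
  have h1 : L H = ∑' k : ℕ, L (d ^ k • ((M ^ k) *ᵥ F0)) := L.map_tsum hs
  have h2 : ∀ k : ℕ, L (d ^ k • ((M ^ k) *ᵥ F0)) = d ^ (k+1) • ((M ^ (k+1)) *ᵥ F0) := by
    intro k
    rw [hL, Matrix.mulVec_smul, Matrix.mulVec_mulVec, smul_smul, ← pow_succ', ← pow_succ']
  have h3 : H = (d ^ 0 • ((M ^ 0) *ᵥ F0)) + ∑' k : ℕ, d ^ (k+1) • ((M ^ (k+1)) *ᵥ F0) :=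
    Summable.tsum_eq_zero_add hs
  simp only [h2] at h1
  rw [hL] at h1
  rw [← h1] at h3
  simpa using h3

noncomputable def sig : (Fin N → ℝ) →L[ℝ] ℝ :=
  LinearMap.toContinuousLinearMap
    { toFun := fun x => ∑ a, x a
      map_add' := by intro x y; simp [Finset.sum_add_distrib]
      map_smul' := by intro c x; simp [Finset.mul_sum] }

lemma sig_tsum (f : ℕ → (Fin N → ℝ)) (hs : Summable f) :
    (∑ a, (∑' k, f k) a) = ∑' k, ∑ a, (f k) a := by
  have := (sig (N := N)).map_tsum hs
  simpa [sig, LinearMap.coe_toContinuousLinearMap'] using this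

lemma inj (d : ℝ) (hd0 : 0 < d) (hd1 : d < 1) (M : Matrix (Fin N) (Fin N) ℝ)
    (h : ∀ b, ∑ a, |M a b| ≤ 1) (x y : Fin N → ℝ)
    (hxy : x - d • (M *ᵥ x) = y - d • (M *ᵥ y)) : x = y := by
  set z := x - y with hz
  have hzeq : z = d • (M *ᵥ z) := by
    rw [hz, Matrix.mulVec_sub, smul_sub]
    linear_combination (norm := module) hxy
  have hle : ∑ a, |z a| ≤ d * ∑ a, |z a| := by
    calc ∑ a, |z a| = ∑ a, |d * (M *ᵥ z) a| := by
          refine Finset.sum_congr rfl fun a _ => ?_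
          conv_lhs => rw [hzeq]
          rfl
      _ = d * ∑ a, |(M *ᵥ z) a| := by
          simp [abs_mul, abs_of_pos hd0, Finset.mul_sum]
      _ ≤ d * ∑ a, |z a| := mul_le_mul_of_nonneg_left (l1_mulVec M h z) hd0.le
  have hnn : 0 ≤ ∑ a, |z a| := Finset.sum_nonneg fun a _ => abs_nonneg _
  have hzero : ∑ a, |z a| = 0 := by nlinarith
  have hall : ∀ a ∈ Finset.univ, |z a| = 0 :=
    (Finset.sum_eq_zero_iff_of_nonneg (fun a _ => abs_nonneg _)).mp hzero
  have hz0 : z = 0 := by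
    funext a
    simpa using abs_eq_zero.mp (hall a (Finset.mem_univ a))
  exact sub_eq_zero.mp (hz ▸ hz0)

end S12

/-- for `0 < d < 1` and `P_g` nonnegative with column sums in `{0, 1}`,
let `P̄_g` be the column-stochastic completion of `P_g` (zero columns replaced by `e`),
`f1 = 1 - σ(P_g e)`, `F0 = d P_g e - d σ(P_g e) e`, `H = ∑ d^k P_g^k F0`,
`H' = ∑ d^k P̄_g^k F0`, `f2 = σ(H' - P_g H')` and `f = f1 + f2`. Then both series
converge and `H' + e = ((1 - d + d f) / (1 - d + d f1)) • (H + e)`. -/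
theorem statement12 {N : ℕ} (hN : 1 ≤ N) (d : ℝ) (hd0 : 0 < d) (hd1 : d < 1)
    (Pg : Matrix (Fin N) (Fin N) ℝ) (hPgnn : ∀ a b, 0 ≤ Pg a b)
    (hcol : ∀ b, (∑ a, Pg a b = 1) ∨ (∑ a, Pg a b = 0)) :
    let e : Fin N → ℝ := fun _ => 1 / N
    let Pbar : Matrix (Fin N) (Fin N) ℝ :=
      Matrix.of fun a b => if (∑ c, Pg c b) = 0 then e a else Pg a b
    let f1 : ℝ := 1 - ∑ a, (Pg *ᵥ e) a
    let F0 : Fin N → ℝ := d • (Pg *ᵥ e) - (d * ∑ a, (Pg *ᵥ e) a) • e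
    Summable (fun k : ℕ => d ^ k • ((Pg ^ k) *ᵥ F0)) ∧
      Summable (fun k : ℕ => d ^ k • ((Pbar ^ k) *ᵥ F0)) ∧
        (let H : Fin N → ℝ := ∑' k : ℕ, d ^ k • ((Pg ^ k) *ᵥ F0)
         let H' : Fin N → ℝ := ∑' k : ℕ, d ^ k • ((Pbar ^ k) *ᵥ F0)
         let f2 : ℝ := ∑ a, (H' - Pg *ᵥ H') a
         let f : ℝ := f1 + f2
         H' + e = ((1 - d + d * f) / (1 - d + d * f1)) • (H + e)) := by
  intro e Pbar f1 F0
  have hNpos : (0:ℝ) < N := by exact_mod_cast hN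
  have he_sum : ∑ a : Fin N, e a = 1 := by
    simp only [e, Finset.sum_const, Finset.card_univ, Fintype.card_fin, nsmul_eq_mul]
    field_simp
  have he_nn : ∀ a, 0 ≤ e a := fun a => by positivity
  have hzero : ∀ b, (∑ c, Pg c b) = 0 → ∀ a, Pg a b = 0 := by
    intro b hb a
    exact (Finset.sum_eq_zero_iff_of_nonneg (fun i _ => hPgnn i b)).mp hb a
      (Finset.mem_univ a)
  have habsPg : ∀ b, ∑ a, |Pg a b| ≤ 1 := by
    intro b
    have h1 : ∑ a, |Pg a b| = ∑ a, Pg a b :=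
      Finset.sum_congr rfl fun a _ => abs_of_nonneg (hPgnn a b)
    rw [h1]
    rcases hcol b with h | h <;> simp [h]
  have habsPbar : ∀ b, ∑ a, |Pbar a b| ≤ 1 := by
    intro b
    by_cases hb : (∑ c, Pg c b) = 0
    · have : ∀ a, Pbar a b = e a := fun a => by simp [Pbar, Matrix.of_apply, hb]
      simp only [this]
      calc ∑ a, |e a| = ∑ a, e a := Finset.sum_congr rfl fun a _ => abs_of_nonneg (he_nn a)
        _ = 1 := he_sum
        _ ≤ 1 := le_refl 1
    · have : ∀ a, Pbar a b = Pg a b := fun a => by simp [Pbar, Matrix.of_apply, hb]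
      simp only [this]
      exact habsPg b
  have summ1 := S12.summable d hd0 hd1 Pg habsPg F0
  have summ2 := S12.summable d hd0 hd1 Pbar habsPbar F0
  refine ⟨summ1, summ2, ?_⟩
  intro H H' f2 f
  -- the "dangling mass" functional
  set cz : (Fin N → ℝ) → ℝ := fun x => ∑ b, if (∑ a, Pg a b) = 0 then x b else 0 with hcz
  -- Pbar acts as Pg plus rank-one correction
  have hPbarvec : ∀ x : Fin N → ℝ, Pbar *ᵥ x = Pg *ᵥ x + cz x • e := by
    intro x
    funext a
    simp only [Matrix.mulVec, dotProduct, Pi.add_apply, Pi.smul_apply, smul_eq_mul, hcz]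
    rw [Finset.sum_mul, ← Finset.sum_add_distrib]
    refine Finset.sum_congr rfl fun b _ => ?_
    by_cases hb : (∑ c, Pg c b) = 0
    · simp [Pbar, Matrix.of_apply, hb, hzero b hb a]
      ring
    · simp [Pbar, Matrix.of_apply, hb]
  have hsigPg : ∀ x : Fin N → ℝ, ∑ a, (Pg *ᵥ x) a = (∑ b, x b) - cz x := by
    intro x
    have h1 : ∑ a, (Pg *ᵥ x) a = ∑ b, (∑ a, Pg a b) * x b := by
      simp only [Matrix.mulVec, dotProduct]
      rw [Finset.sum_comm]
      exact Finset.sum_congr rfl fun b _ => (Finset.sum_mul _ _ _).symm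
    rw [h1, hcz, ← Finset.sum_sub_distrib]
    refine Finset.sum_congr rfl fun b _ => ?_
    rcases hcol b with h | h
    · have hb : ¬ (∑ a, Pg a b) = 0 := by rw [h]; norm_num
      simp [h, hb]
    · simp [h]
  have hsigPbar : ∀ x : Fin N → ℝ, ∑ a, (Pbar *ᵥ x) a = ∑ b, x b := by
    intro x
    rw [hPbarvec]
    simp only [Pi.add_apply, Pi.smul_apply, smul_eq_mul, Finset.sum_add_distrib,
      ← Finset.mul_sum, hsigPg, he_sum]
    ring
  -- σ(F0) = 0
  have hsF0 : ∑ a, F0 a = 0 := by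
    simp only [F0, Pi.sub_apply, Pi.smul_apply, smul_eq_mul, Finset.sum_sub_distrib,
      ← Finset.mul_sum, he_sum]
    ring
  have hpow0 : ∀ k : ℕ, ∑ a, ((Pbar ^ k) *ᵥ F0) a = 0 := by
    intro k
    induction k with
    | zero => simpa using hsF0
    | succ n ih =>
        have h1 : (Pbar ^ (n+1)) *ᵥ F0 = Pbar *ᵥ ((Pbar ^ n) *ᵥ F0) := by
          rw [Matrix.mulVec_mulVec, ← pow_succ']
        rw [h1, hsigPbar, ih]
  have hsigH' : ∑ a, H' a = 0 := by
    show (∑ a, (∑' k : ℕ, d ^ k • ((Pbar ^ k) *ᵥ F0)) a) = 0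
    rw [S12.sig_tsum _ summ2]
    have : ∀ k : ℕ, (∑ a, (d ^ k • ((Pbar ^ k) *ᵥ F0)) a) = 0 := by
      intro k
      simp only [Pi.smul_apply, smul_eq_mul, ← Finset.mul_sum, hpow0, mul_zero]
    rw [tsum_congr this]
    exact tsum_zero
  have hH : H = F0 + d • (Pg *ᵥ H) := S12.fixedpt d Pg F0 summ1
  have hH'0 : H' = F0 + d • (Pbar *ᵥ H') := S12.fixedpt d Pbar F0 summ2
  have hH' : H' = F0 + d • (Pg *ᵥ H') + (d * cz H') • e := by
    have h1 := hPbarvec H'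
    calc H' = F0 + d • (Pbar *ᵥ H') := hH'0
      _ = F0 + d • (Pg *ᵥ H' + cz H' • e) := by rw [h1]
      _ = F0 + d • (Pg *ᵥ H') + (d * cz H') • e := by module
  -- f2 equals the dangling mass of H'
  have hf2 : f2 = cz H' := by
    show (∑ a, (H' - Pg *ᵥ H') a) = cz H'
    simp only [Pi.sub_apply, Finset.sum_sub_distrib, hsigPg H', hsigH']
    ring
  set s : ℝ := ∑ a, (Pg *ᵥ e) a with hsdef
  have hs0 : 0 ≤ s := by
    refine Finset.sum_nonneg fun a _ => ?_
    show 0 ≤ ∑ b, Pg a b * e b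
    exact Finset.sum_nonneg fun b _ => mul_nonneg (hPgnn a b) (he_nn b)
  have hs1 : s ≤ 1 := by
    have h1 : s = 1 - cz e := by rw [hsdef, hsigPg e, he_sum]
    have h2 : 0 ≤ cz e := by
      refine Finset.sum_nonneg fun b _ => ?_
      split <;> [exact he_nn b; exact le_refl 0]
    linarith
  have hden : 0 < 1 - d * s := by nlinarith
  have hf1 : f1 = 1 - s := rfl
  have hfs : f = f1 + f2 := rfl
  -- the two key vector identities
  have hHe : (H + e) - d • (Pg *ᵥ (H + e)) = (1 - d * s) • e := by
    rw [Matrix.mulVec_add]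
    have h1 : H - d • (Pg *ᵥ H) = F0 := by linear_combination (norm := module) hH
    calc (H + e) - d • (Pg *ᵥ H + Pg *ᵥ e)
        = (H - d • (Pg *ᵥ H)) + (e - d • (Pg *ᵥ e)) := by module
      _ = F0 + (e - d • (Pg *ᵥ e)) := by rw [h1]
      _ = (1 - d * s) • e := by
          show (d • (Pg *ᵥ e) - (d * s) • e) + (e - d • (Pg *ᵥ e)) = (1 - d * s) • e
          module
  have hH'e : (H' + e) - d • (Pg *ᵥ (H' + e)) = (1 - d * s + d * cz H') • e := by
    rw [Matrix.mulVec_add]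
    have h1 : H' - d • (Pg *ᵥ H') = F0 + (d * cz H') • e := by
      linear_combination (norm := module) hH'
    calc (H' + e) - d • (Pg *ᵥ H' + Pg *ᵥ e)
        = (H' - d • (Pg *ᵥ H')) + (e - d • (Pg *ᵥ e)) := by module
      _ = (F0 + (d * cz H') • e) + (e - d • (Pg *ᵥ e)) := by rw [h1]
      _ = (1 - d * s + d * cz H') • e := by
          show ((d • (Pg *ᵥ e) - (d * s) • e) + (d * cz H') • e) + (e - d • (Pg *ᵥ e))
              = (1 - d * s + d * cz H') • e
          module
  set r : ℝ := (1 - d + d * f) / (1 - d + d * f1) with hr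
  have hnum : 1 - d + d * f = 1 - d * s + d * cz H' := by
    rw [hfs, hf2, hf1]; ring
  have hdenom : 1 - d + d * f1 = 1 - d * s := by rw [hf1]; ring
  have hrval : r * (1 - d * s) = 1 - d * s + d * cz H' := by
    rw [hr, hnum, hdenom]
    field_simp
  refine S12.inj d hd0 hd1 Pg habsPg _ _ ?_
  have hrhs : (r • (H + e)) - d • (Pg *ᵥ (r • (H + e))) = (r * (1 - d * s)) • e := by
    rw [Matrix.mulVec_smul]
    calc r • (H + e) - d • (r • (Pg *ᵥ (H + e)))
        = r • ((H + e) - d • (Pg *ᵥ (H + e))) := by module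
      _ = r • ((1 - d * s) • e) := by rw [hHe]
      _ = (r * (1 - d * s)) • e := by module
    
  rw [hH'e, hrhs, hrval]
end
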